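/- Let q be even, ψ a nontrivial additive character of F_q, and ε : F_q → {±1} the character whose kernel is the image of x ↦ x² + x. For a, b, c ∈ F_q, the sum of ψ(-ax - by - cz) over all nonzero triples (x,y,z) ∈ F_q³ with y² = xz equals: q² - 1 if a = b = c = 0; -1 if b = 0 and (a,c) ≠ (0,0); q - 1 if b ≠ 0 and ε(ac b⁻²) = 1; and -q - 1 if b ≠ 0 and ε(ac b⁻²) = -1. -/

import Mathlib

open Finset
open scoped Classical

private lemma aux2' {F : Type*} [Fintype F] [AddGroup F] (g : F → ℂ)
    (hmul : ∀ x y, g (x + y) = g x * g y) (hS : (∑ v : F, g v) ≠ 0) : ∀ x, g x = 1 := by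
  intro x
  have h1 : ∑ v : F, g (x + v) = ∑ v : F, g v := Equiv.sum_comp (Equiv.addLeft x) g
  have h2 : ∑ v : F, g (x + v) = g x * ∑ v : F, g v := by
    rw [Finset.mul_sum]; exact Finset.sum_congr rfl fun v _ => hmul x v
  have h3 : g x * ∑ v : F, g v = 1 * ∑ v : F, g v := by rw [h2.symm.trans h1, one_mul]
  exact mul_right_cancel₀ hS h3

private lemma aux1' {F : Type*} [Field F] [Fintype F] (ψ : AddChar F ℂ) (hψ : ψ ≠ 1) (t : F) :
    ∑ y : F, ψ (t * y) = if t = 0 then (Fintype.card F : ℂ) else 0 := by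
  have hsum0 : (∑ y : F, ψ y) = 0 := by
    by_contra h
    exact hψ (DFunLike.ext _ _ fun x => by
      simpa using aux2' (fun y => ψ y) (fun x y => ψ.map_add_eq_mul x y) h x)
  split_ifs with ht
  · simp [ht, Finset.card_univ]
  · calc ∑ y : F, ψ (t * y) = ∑ y : F, ψ y := Equiv.sum_comp (Equiv.mulLeft₀ t ht) ψ
    _ = 0 := hsum0

private lemma auxfibersum {F : Type*} [Field F] [Fintype F] [CharP F 2]
    (ε : F → ℤ)
    (hεker : ∀ x : F, ε x = 1 ↔ ∃ t : F, t ^ 2 + t = x)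
    (hεval : ∀ x : F, ε x = 1 ∨ ε x = -1) (g : F → ℂ) :
    ∑ u : F, g (u ^ 2 + u) = ∑ v : F, ((1 + ε v : ℤ) : ℂ) * g v := by
  have hcard : ∀ v : F, (((Finset.univ.filter (fun u : F => u ^ 2 + u = v)).card : ℤ)) = 1 + ε v := by
    intro v
    have h2 : (2 : F) = 0 := CharTwo.two_eq_zero
    rcases hεval v with h1 | h1
    · obtain ⟨t, ht⟩ := (hεker v).mp h1
      have hset : (Finset.univ.filter (fun u : F => u ^ 2 + u = v)) = {t, t + 1} := by
        ext u
        simp only [Finset.mem_filter, Finset.mem_univ, true_and, Finset.mem_insert,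
          Finset.mem_singleton]
        constructor
        · intro hu
          have hut : u ^ 2 + u = t ^ 2 + t := hu.trans ht.symm
          have key : (u + t) * (u + t + 1) = 0 := by
            linear_combination hut + (u * t + t ^ 2 + t) * h2
          rcases mul_eq_zero.mp key with h | h
          · left; linear_combination h - t * h2
          · right; linear_combination h - (t + 1) * h2
        · rintro (rfl | rfl)
          · exact ht
          · linear_combination ht + (t + 1) * h2
      rw [hset, h1, Finset.card_insert_of_notMem (by simp [left_eq_add]),
        Finset.card_singleton]
      norm_num
    · have hset : (Finset.univ.filter (fun u : F => u ^ 2 + u = v)) = ∅ := by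
        rw [Finset.filter_eq_empty_iff]
        intro u _ hu
        have : ε v = 1 := (hεker v).mpr ⟨u, hu⟩
        omega
      rw [hset, h1]
      norm_num
  rw [← Finset.sum_fiberwise_of_maps_to (t := Finset.univ) (g := fun u : F => u ^ 2 + u)
    (fun u _ => Finset.mem_univ _) (fun u => g (u ^ 2 + u))]
  refine Finset.sum_congr rfl fun v _ => ?_
  have : ∑ u ∈ Finset.univ.filter (fun u : F => u ^ 2 + u = v), g (u ^ 2 + u)
      = ∑ u ∈ Finset.univ.filter (fun u : F => u ^ 2 + u = v), g v := by
    refine Finset.sum_congr rfl fun u hu => ?_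
    rw [(Finset.mem_filter.mp hu).2]
  rw [this, Finset.sum_const, nsmul_eq_mul]
  congr 1
  have := hcard v
  push_cast [← this]
  norm_num

private lemma auxbeta {F : Type*} [Field F] [Fintype F] [CharP F 2]
    (ψ : AddChar F ℂ) (hψ : ψ ≠ 1)
    (ε : F → ℤ) (hεhom : ∀ x y : F, ε (x + y) = ε x * ε y)
    (hεker : ∀ x : F, ε x = 1 ↔ ∃ t : F, t ^ 2 + t = x)
    (hεval : ∀ x : F, ε x = 1 ∨ ε x = -1) :
    ∃ β : F, β ≠ 0 ∧ ∀ v : F, ψ (β * v) = (ε v : ℂ) := by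
  -- there is v₀ with ε v₀ = -1
  obtain ⟨v₀, hv₀⟩ : ∃ v₀ : F, ε v₀ = -1 := by
    have hni : ¬ Function.Injective (fun t : F => t ^ 2 + t) := by
      intro h
      have h01 : (0 : F) = 1 := h (by
        show (0:F)^2 + 0 = 1^2+1
        have h2 : (2 : F) = 0 := CharTwo.two_eq_zero
        linear_combination -h2)
      exact zero_ne_one h01
    have hns : ¬ Function.Surjective (fun t : F => t ^ 2 + t) := by
      intro h; exact hni ((Finite.injective_iff_surjective).mpr h)
    rw [Function.Surjective] at hns
    push_neg at hns
    obtain ⟨v₀, hv₀⟩ := hns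
    refine ⟨v₀, ?_⟩
    rcases hεval v₀ with h | h
    · obtain ⟨t, ht⟩ := (hεker v₀).mp h; exact absurd ht (hv₀ t)
    · exact h
  -- find β with nonzero Gauss-type sum
  have hexβ : ∃ β : F, (∑ v : F, (ε v : ℂ) * ψ (β * v)) ≠ 0 := by
    by_contra hall
    push_neg at hall
    have hkey : ∑ s : F, (∑ v : F, (ε v : ℂ) * ψ (s * v)) * ψ (s * v₀)
        = (ε v₀ : ℂ) * (Fintype.card F : ℂ) := by
      have : ∀ s : F, (∑ v : F, (ε v : ℂ) * ψ (s * v)) * ψ (s * v₀)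
          = ∑ v : F, (ε v : ℂ) * ψ ((v + v₀) * s) := by
        intro s
        rw [Finset.sum_mul]
        refine Finset.sum_congr rfl fun v _ => ?_
        rw [mul_assoc, ← ψ.map_add_eq_mul]
        ring_nf
      rw [Finset.sum_congr rfl fun s _ => this s, Finset.sum_comm]
      have : ∀ v : F, ∑ s : F, (ε v : ℂ) * ψ ((v + v₀) * s)
          = (ε v : ℂ) * (if v + v₀ = 0 then (Fintype.card F : ℂ) else 0) := by
        intro v
        rw [← Finset.mul_sum, aux1' ψ hψ]
      rw [Finset.sum_congr rfl fun v _ => this v]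
      have hconv : ∀ v : F, (ε v : ℂ) * (if v + v₀ = 0 then (Fintype.card F : ℂ) else 0)
          = if v = v₀ then (ε v : ℂ) * (Fintype.card F : ℂ) else 0 := by
        intro v
        rw [add_eq_zero_iff_eq_neg, CharTwo.neg_eq]
        split_ifs <;> simp
      rw [Finset.sum_congr rfl fun v _ => hconv v, Finset.sum_ite_eq' Finset.univ v₀]
      simp
    rw [Finset.sum_congr rfl fun s _ => by rw [hall s, zero_mul]] at hkey
    rw [Finset.sum_const_zero] at hkey
    rw [hv₀] at hkey
    push_cast at hkey
    have hq0 : (Fintype.card F : ℂ) = 0 := by linear_combination hkey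
    have : (Fintype.card F : ℂ) ≠ 0 := Nat.cast_ne_zero.mpr Fintype.card_ne_zero
    exact this hq0
  obtain ⟨β, hβ⟩ := hexβ
  have hg : ∀ v : F, (ε v : ℂ) * ψ (β * v) = 1 := by
    refine aux2' (fun v => (ε v : ℂ) * ψ (β * v)) (fun x y => ?_) hβ
    have hε0 : ε 0 = 1 := (hεker 0).mpr ⟨0, by ring⟩
    push_cast [hεhom x y, mul_add, ψ.map_add_eq_mul]
    ring
  have hval : ∀ v : F, ψ (β * v) = (ε v : ℂ) := by
    intro v
    have h1 := hg v
    rcases hεval v with h | h <;> rw [h] at h1 ⊢ <;> push_cast at h1 ⊢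
    · linear_combination h1
    · linear_combination -h1
  refine ⟨β, ?_, hval⟩
  intro hβ0
  have := hval v₀
  rw [hβ0, zero_mul, ψ.map_zero_eq_one, hv₀] at this
  norm_num at this

private lemma auxchar' {F : Type*} [Field F] [Fintype F] (hq : Even (Fintype.card F)) :
    CharP F 2 := by
  haveI := ringChar.charP F
  obtain ⟨n, hp, hn⟩ := FiniteField.card F (ringChar F)
  have h2 : 2 ∣ ringChar F := by
    have : 2 ∣ ringChar F ^ (n : ℕ) := by rw [← hn]; exact hq.two_dvd
    exact (Nat.Prime.dvd_of_dvd_pow Nat.prime_two) this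
  have : ringChar F = 2 := ((Nat.prime_dvd_prime_iff_eq Nat.prime_two hp).mp h2).symm
  rw [← this]; infer_instance

theorem stmt4 {F : Type*} [Field F] [Fintype F] (hq : Even (Fintype.card F))
    (ψ : AddChar F ℂ) (hψ : ψ ≠ 1)
    (ε : F → ℤ) (hεhom : ∀ x y : F, ε (x + y) = ε x * ε y)
    (hεker : ∀ x : F, ε x = 1 ↔ ∃ t : F, t ^ 2 + t = x)
    (hεval : ∀ x : F, ε x = 1 ∨ ε x = -1)
    (a b c : F) :
    (∑ x : F, ∑ y : F, ∑ z : F,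
        if y ^ 2 = x * z ∧ (x, y, z) ≠ ((0 : F), (0 : F), (0 : F))
        then ψ (-(a * x) - b * y - c * z) else 0) =
      if a = 0 ∧ b = 0 ∧ c = 0 then (Fintype.card F : ℂ) ^ 2 - 1
      else if b = 0 ∧ (a, c) ≠ ((0 : F), (0 : F)) then -1
      else if ε (a * c / b ^ 2) = 1 then (Fintype.card F : ℂ) - 1
      else -(Fintype.card F : ℂ) - 1 := by
  haveI : CharP F 2 := auxchar' hq
  set q : ℂ := (Fintype.card F : ℂ) with hqdef
  have hneg : ∀ w : F, -w = w := fun w => CharTwo.neg_eq w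
  have hsummand : ∀ x y z : F, ψ (-(a * x) - b * y - c * z) = ψ (a * x + b * y + c * z) := by
    intro x y z
    congr 1
    rw [sub_eq_add_neg, sub_eq_add_neg, hneg (a*x), hneg (b*y), hneg (c*z)]
  -- Step 1
  have step1 : (∑ x : F, ∑ y : F, ∑ z : F,
        if y ^ 2 = x * z ∧ (x, y, z) ≠ ((0 : F), (0 : F), (0 : F))
        then ψ (-(a * x) - b * y - c * z) else 0)
      = ((if c = 0 then q else 0) - 1)
        + ∑ x ∈ ({0}ᶜ : Finset F), ∑ y : F, ψ (a * x + b * y + c * (x⁻¹ * y ^ 2)) := by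
    rw [Fintype.sum_eq_add_sum_compl 0]
    congr 1
    · -- x = 0 piece
      have e1 : ∀ y : F, (∑ z : F,
          if y ^ 2 = 0 * z ∧ ((0:F), y, z) ≠ ((0 : F), (0 : F), (0 : F))
          then ψ (-(a * 0) - b * y - c * z) else 0)
          = (if y = 0 then (∑ z : F, if z = 0 then 0 else ψ (c * z)) else 0) := by
        intro y
        by_cases hy : y = 0
        · rw [if_pos hy]
          refine Finset.sum_congr rfl fun z _ => ?_
          by_cases hz : z = 0
          · simp [hy, hz]
          · rw [if_neg hz, if_pos ⟨by rw [hy]; ring, by simp [hy, hz, Prod.ext_iff]⟩,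
              hsummand]
            rw [hy]; ring_nf
        · rw [if_neg hy]
          refine Finset.sum_eq_zero fun z _ => ?_
          rw [if_neg]
          rintro ⟨h, -⟩
          exact hy (pow_eq_zero_iff (n := 2) (by norm_num) |>.mp (by rwa [zero_mul] at h))
      rw [Finset.sum_congr rfl fun y _ => e1 y, Finset.sum_ite_eq' Finset.univ (0:F)]
      rw [if_pos (Finset.mem_univ _)]
      have e2 : ∀ z : F, (if z = 0 then (0:ℂ) else ψ (c * z))
          = ψ (c * z) - (if z = 0 then ψ (c * z) else 0) := by
        intro z; split_ifs <;> ring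
      rw [Finset.sum_congr rfl fun z _ => e2 z, Finset.sum_sub_distrib,
        Finset.sum_ite_eq' Finset.univ (0:F), if_pos (Finset.mem_univ _),
        aux1' ψ hψ c]
      simp [hqdef]
    · -- x ≠ 0 piece
      refine Finset.sum_congr rfl fun x hx => ?_
      have hx0 : x ≠ 0 := by simpa using hx
      refine Finset.sum_congr rfl fun y _ => ?_
      have e3 : ∀ z : F, (if y ^ 2 = x * z ∧ (x, y, z) ≠ ((0 : F), (0 : F), (0 : F))
          then ψ (-(a * x) - b * y - c * z) else 0)
          = (if z = x⁻¹ * y ^ 2 then ψ (a * x + b * y + c * (x⁻¹ * y ^ 2)) else 0) := by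
        intro z
        by_cases hz : z = x⁻¹ * y ^ 2
        · subst hz
          rw [if_pos rfl, if_pos ⟨by field_simp, by simp [Prod.ext_iff, hx0]⟩, hsummand]
        · rw [if_neg hz, if_neg]
          rintro ⟨h, -⟩
          exact hz (by field_simp; linear_combination -h)
      rw [Finset.sum_congr rfl fun z _ => e3 z, Finset.sum_ite_eq' Finset.univ,
        if_pos (Finset.mem_univ _)]
  rw [step1]
  by_cases hc : c = 0
  · -- c = 0 case
    subst hc
    have e4 : ∀ x ∈ ({0}ᶜ : Finset F), ∑ y : F, ψ (a * x + b * y + 0 * (x⁻¹ * y ^ 2))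
        = ψ (a * x) * (if b = 0 then q else 0) := by
      intro x _
      rw [← aux1' ψ hψ b, Finset.mul_sum]
      refine Finset.sum_congr rfl fun y _ => ?_
      rw [← ψ.map_add_eq_mul]
      congr 1; ring
    rw [Finset.sum_congr rfl e4, ← Finset.sum_mul]
    have e5 : ∑ x ∈ ({0}ᶜ : Finset F), ψ (a * x) = (if a = 0 then q else 0) - 1 := by
      have := Fintype.sum_eq_add_sum_compl (0:F) (fun x => ψ (a * x))
      rw [aux1' ψ hψ a] at this
      have h0 : ψ (a * 0) = 1 := by rw [mul_zero, ψ.map_zero_eq_one]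
      rw [h0, ← hqdef] at this
      linear_combination -this
    rw [e5, if_pos rfl]
    have hεc : ε (a * 0 / b ^ 2) = 1 := by
      rw [mul_zero, zero_div]; exact (hεker 0).mpr ⟨0, by ring⟩
    by_cases ha : a = 0 <;> by_cases hb : b = 0
    · rw [if_pos (show a = 0 ∧ b = 0 ∧ (0:F) = 0 from ⟨ha, hb, rfl⟩), if_pos ha, if_pos hb]
      ring
    · rw [if_neg (show ¬(a = 0 ∧ b = 0 ∧ (0:F) = 0) from fun h => hb h.2.1),
        if_neg (show ¬(b = 0 ∧ (a, (0:F)) ≠ ((0:F), (0:F))) from fun h => hb h.1),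
        if_pos hεc, if_pos ha, if_neg hb]
      ring
    · rw [if_neg (show ¬(a = 0 ∧ b = 0 ∧ (0:F) = 0) from fun h => ha h.1),
        if_pos (show b = 0 ∧ (a, (0:F)) ≠ ((0:F), (0:F)) from
          ⟨hb, fun h => ha (Prod.ext_iff.mp h).1⟩), if_neg ha, if_pos hb]
      ring
    · rw [if_neg (show ¬(a = 0 ∧ b = 0 ∧ (0:F) = 0) from fun h => ha h.1),
        if_neg (show ¬(b = 0 ∧ (a, (0:F)) ≠ ((0:F), (0:F))) from fun h => hb h.1),
        if_pos hεc, if_neg ha, if_neg hb]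
      ring
  · -- c ≠ 0
    have hsq : Function.Bijective (fun u : F => u ^ 2) := by
      rw [← Finite.injective_iff_bijective]
      intro u v h
      have h2 : (u + v) ^ 2 = 0 := by
        have h0 : (2 : F) = 0 := CharTwo.two_eq_zero
        simp only at h
        linear_combination h + (u * v + v ^ 2) * h0
      have := pow_eq_zero_iff (n := 2) (by norm_num) |>.mp h2
      linear_combination this - v * (CharTwo.two_eq_zero (R := F))
    by_cases hb : b = 0
    · -- b = 0, c ≠ 0 : inner sums vanish
      subst hb
      have e6 : ∀ x ∈ ({0}ᶜ : Finset F), ∑ y : F, ψ (a * x + 0 * y + c * (x⁻¹ * y ^ 2))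
          = 0 := by
        intro x hx
        have hx0 : x ≠ 0 := by simpa using hx
        have : ∀ y : F, ψ (a * x + 0 * y + c * (x⁻¹ * y ^ 2))
            = ψ (a * x) * ψ ((c * x⁻¹) * y ^ 2) := by
          intro y
          rw [← ψ.map_add_eq_mul]; congr 1; ring
        rw [Finset.sum_congr rfl fun y _ => this y, ← Finset.mul_sum]
        have hrw : ∑ y : F, ψ ((c * x⁻¹) * y ^ 2) = ∑ u : F, ψ ((c * x⁻¹) * u) :=
          Function.Bijective.sum_comp hsq (fun u => ψ ((c * x⁻¹) * u))
        rw [hrw, aux1' ψ hψ, if_neg (mul_ne_zero hc (inv_ne_zero hx0)), mul_zero]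
      rw [Finset.sum_congr rfl e6, Finset.sum_const_zero, if_neg hc,
        if_neg (by tauto), if_pos ⟨rfl, by simp [Prod.ext_iff, hc]⟩]
      ring
    · -- b ≠ 0, c ≠ 0 : main case
      obtain ⟨β, hβ0, hβ⟩ := auxbeta ψ hψ ε hεhom hεker hεval
      have hb2 : (b : F) ^ 2 ≠ 0 := pow_ne_zero 2 hb
      set x₀ : F := c * β / b ^ 2 with hx₀def
      have hx₀ : x₀ ≠ 0 := div_ne_zero (mul_ne_zero hc hβ0) hb2
      have hinner : ∀ x ∈ ({0}ᶜ : Finset F),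
          ∑ y : F, ψ (a * x + b * y + c * (x⁻¹ * y ^ 2))
          = if x = x₀ then ψ (a * x) * q else 0 := by
        intro x hx
        have hx0 : x ≠ 0 := by simpa using hx
        have hd : c * x⁻¹ ≠ 0 := mul_ne_zero hc (inv_ne_zero hx0)
        set s : F := b / (c * x⁻¹) with hsdef
        have hs : s ≠ 0 := div_ne_zero hb hd
        set w : F := b ^ 2 * x * c⁻¹ with hwdef
        have hw : w ≠ 0 := mul_ne_zero (mul_ne_zero hb2 hx0) (inv_ne_zero hc)
        calc ∑ y : F, ψ (a * x + b * y + c * (x⁻¹ * y ^ 2))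
            = ∑ u : F, ψ (a * x + b * (s * u) + c * (x⁻¹ * (s * u) ^ 2)) :=
              (Equiv.sum_comp (Equiv.mulLeft₀ s hs)
                (fun y => ψ (a * x + b * y + c * (x⁻¹ * y ^ 2)))).symm
          _ = ∑ u : F, ψ (a * x) * ψ (w * (u ^ 2 + u)) := by
              refine Finset.sum_congr rfl fun u _ => ?_
              rw [← ψ.map_add_eq_mul]
              congr 1
              rw [hsdef, hwdef]
              field_simp
              ring
          _ = ψ (a * x) * ∑ v : F, ((1 + ε v : ℤ) : ℂ) * ψ (w * v) := by
              rw [← Finset.mul_sum,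
                auxfibersum ε hεker hεval (fun v => ψ (w * v))]
          _ = ψ (a * x) * ((∑ v : F, ψ (w * v)) + ∑ v : F, ψ ((β + w) * v)) := by
              congr 1
              rw [← Finset.sum_add_distrib]
              refine Finset.sum_congr rfl fun v _ => ?_
              push_cast
              rw [add_mul, one_mul, ← hβ v, ← ψ.map_add_eq_mul]
              congr 2
              ring
          _ = if x = x₀ then ψ (a * x) * q else 0 := by
              rw [aux1' ψ hψ w, aux1' ψ hψ (β + w), if_neg hw]
              have hiff : β + w = 0 ↔ x = x₀ := by
                rw [add_eq_zero_iff_eq_neg, CharTwo.neg_eq, hwdef, hx₀def]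
                rw [eq_div_iff hb2]
                constructor
                · intro h; field_simp at h; linear_combination -h
                · intro h; field_simp; linear_combination -h
              by_cases hxx : x = x₀
              · rw [if_pos (hiff.mpr hxx), if_pos hxx]; ring
              · rw [if_neg (fun h => hxx (hiff.mp h)), if_neg hxx]; ring
      rw [Finset.sum_congr rfl hinner,
        Finset.sum_ite_eq' ({0}ᶜ : Finset F) x₀ (fun x => ψ (a * x) * q), if_neg hc,
        if_pos (show x₀ ∈ ({0}ᶜ : Finset F) by simpa using hx₀)]
      have harg : a * x₀ = β * (a * c / b ^ 2) := by rw [hx₀def]; ring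
      rw [harg, hβ (a * c / b ^ 2)]
      rw [if_neg (by tauto), if_neg (by tauto)]
      rcases hεval (a * c / b ^ 2) with h | h <;> rw [h] <;> push_cast <;> ring
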